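/- The graph P4 + P3 (disjoint union of a path on four vertices and a path on three vertices) satisfies χ = 2 and b = 3, and every proper induced subgraph H of it satisfies b(H) = χ(H). -/

import Mathlib

open SimpleGraph

/-- A b-coloring of `G` with `k` colors: a proper coloring using all `k` colors in which
every color class contains a b-vertex, i.e. a vertex with a neighbour of every other color. -/
def IsBColoring {V : Type*} (G : SimpleGraph V) {k : ℕ} (c : V → Fin k) : Prop :=
  (∀ ⦃u v : V⦄, G.Adj u v → c u ≠ c v) ∧
  ∀ i : Fin k, ∃ u : V, c u = i ∧ ∀ j : Fin k, j ≠ i → ∃ v : V, G.Adj u v ∧ c v = j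

/-- The b-chromatic number: the largest `k` such that `G` admits a b-coloring with `k` colors. -/
noncomputable def bChromaticNumber {V : Type*} (G : SimpleGraph V) : ℕ :=
  sSup {k : ℕ | ∃ c : V → Fin k, IsBColoring G c}

/-- `G` contains an induced copy of `H`. -/
def HasInducedCopy {V : Type*} {W : Type*} (G : SimpleGraph V) (H : SimpleGraph W) : Prop :=
  ∃ f : W → V, Function.Injective f ∧ ∀ a b : W, G.Adj (f a) (f b) ↔ H.Adj a b

/-- `G` contains an induced (chordless) cycle on `n` vertices. -/
def HasInducedCycle {V : Type*} (G : SimpleGraph V) (n : ℕ) : Prop :=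
  ∃ f : ZMod n → V, Function.Injective f ∧
    ∀ i j : ZMod n, G.Adj (f i) (f j) ↔ (j = i + 1 ∨ i = j + 1)

/-- A graph is chordal iff it has no induced cycle of length at least 4. -/
def IsChordalGraph {V : Type*} (G : SimpleGraph V) : Prop :=
  ∀ n : ℕ, 4 ≤ n → ¬ HasInducedCycle G n

/-- The graph on `Fin n` with the given edge list. -/
def graphOfList (n : ℕ) (E : List (Fin n × Fin n)) : SimpleGraph (Fin n) :=
  SimpleGraph.fromRel (fun a b => (a, b) ∈ E)
/-- The graph P₄ + P₃: disjoint union of a path on four vertices and a path on three vertices. -/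
def graphP4P3 : SimpleGraph (Fin 7) := graphOfList 7 [(0, 1), (1, 2), (2, 3), (4, 5), (5, 6)]

instance : DecidableRel graphP4P3.Adj := fun a b =>
  decidable_of_iff (a ≠ b ∧ ((a, b) ∈ [((0:Fin 7), (1:Fin 7)), (1, 2), (2, 3), (4, 5), (5, 6)] ∨
    (b, a) ∈ [((0:Fin 7), (1:Fin 7)), (1, 2), (2, 3), (4, 5), (5, 6)])) Iff.rfl

/-- Every vertex of P₄+P₃ has at most two neighbours. -/
lemma P4P3_deg_le_two : ∀ u v1 v2 v3 : Fin 7, graphP4P3.Adj u v1 → graphP4P3.Adj u v2 →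
    graphP4P3.Adj u v3 → (v1 = v2 ∨ v1 = v3 ∨ v2 = v3) := by decide

/-- Classification of vertices of degree 2 and their neighbours. -/
lemma P4P3_two_nbrs : ∀ u v w : Fin 7, graphP4P3.Adj u v → graphP4P3.Adj u w → v ≠ w →
    (u = 1 ∧ ((v = 0 ∧ w = 2) ∨ (v = 2 ∧ w = 0))) ∨
    (u = 2 ∧ ((v = 1 ∧ w = 3) ∨ (v = 3 ∧ w = 1))) ∨
    (u = 5 ∧ ((v = 4 ∧ w = 6) ∨ (v = 6 ∧ w = 4))) := by decide

/-- The parity 2-coloring of P₄+P₃. -/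
def pcP4P3 : Fin 7 → Fin 2 := ![0, 1, 0, 1, 0, 1, 0]

lemma pcP4P3_valid : ∀ ⦃u v : Fin 7⦄, graphP4P3.Adj u v → pcP4P3 u ≠ pcP4P3 v := by decide

lemma fin2_cover : ∀ x y z : Fin 2, x ≠ y → z = x ∨ z = y := by decide

lemma fin7_cases : ∀ x : Fin 7,
    x = 0 ∨ x = 1 ∨ x = 2 ∨ x = 3 ∨ x = 4 ∨ x = 5 ∨ x = 6 := by decide

lemma P4P3_bcoloring3 : IsBColoring graphP4P3 (![1, 0, 2, 1, 0, 1, 2] : Fin 7 → Fin 3) := by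
  unfold IsBColoring; decide

/-- A graph that is 2-colorable and has an edge has chromatic number 2. -/
lemma chromaticNumber_eq_two_of {V : Type*} {G : SimpleGraph V} (h2 : G.Colorable 2)
    {a b : V} (hab : G.Adj a b) : G.chromaticNumber = 2 := by
  refine le_antisymm ?_ ?_
  · exact_mod_cast h2.chromaticNumber_le
  · have h1 : ¬ G.chromaticNumber ≤ 1 := by
      rw [← Nat.cast_one, chromaticNumber_le_iff_colorable]
      rintro ⟨C⟩
      exact C.valid hab (Subsingleton.elim _ _)
    have := Order.add_one_le_of_lt (lt_of_not_ge h1)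
    simpa [one_add_one_eq_two] using this

lemma bChromaticNumber_eq {V : Type*} (G : SimpleGraph V) (n : ℕ)
    (hmem : ∃ c : V → Fin n, IsBColoring G c)
    (hub : ∀ k : ℕ, (∃ c : V → Fin k, IsBColoring G c) → k ≤ n) :
    bChromaticNumber G = n := by
  refine le_antisymm (csSup_le ⟨n, hmem⟩ hub) (le_csSup ⟨n, hub⟩ hmem)

/-- P₄ + P₃ satisfies χ = 2 and b = 3, while every proper induced subgraph `H`
satisfies b(H) = χ(H). -/
theorem P4P3_minimally_bImperfect :
    graphP4P3.chromaticNumber = 2 ∧ bChromaticNumber graphP4P3 = 3 ∧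
    ∀ s : Set (Fin 7), s ≠ Set.univ →
      (bChromaticNumber (graphP4P3.induce s) : ℕ∞) = (graphP4P3.induce s).chromaticNumber := by
  have hadj01 : graphP4P3.Adj 0 1 := by decide
  have col2 : graphP4P3.Colorable 2 := ⟨Coloring.mk pcP4P3 (fun {u v} h => pcP4P3_valid h)⟩
  refine ⟨chromaticNumber_eq_two_of col2 hadj01, ?_, ?_⟩
  · -- b-chromatic number is 3
    refine bChromaticNumber_eq _ 3 ⟨(![1, 0, 2, 1, 0, 1, 2] : Fin 7 → Fin 3), P4P3_bcoloring3⟩ ?_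
    rintro k ⟨c, hc⟩
    by_contra hk
    push_neg at hk
    have h4 : 4 ≤ k := hk
    obtain ⟨u, -, hb⟩ := hc.2 ⟨0, by omega⟩
    obtain ⟨v1, ha1, hc1⟩ := hb ⟨1, by omega⟩ (by simp [Fin.ext_iff])
    obtain ⟨v2, ha2, hc2⟩ := hb ⟨2, by omega⟩ (by simp [Fin.ext_iff])
    obtain ⟨v3, ha3, hc3⟩ := hb ⟨3, by omega⟩ (by simp [Fin.ext_iff])
    rcases P4P3_deg_le_two u v1 v2 v3 ha1 ha2 ha3 with h | h | h
    · rw [h, hc2] at hc1; simp [Fin.ext_iff] at hc1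
    · rw [h, hc3] at hc1; simp [Fin.ext_iff] at hc1
    · rw [h, hc3] at hc2; simp [Fin.ext_iff] at hc2
  · -- every proper induced subgraph
    intro s hs
    by_cases hE : ∃ a b : Fin 7, a ∈ s ∧ b ∈ s ∧ graphP4P3.Adj a b
    · -- H has an edge : both numbers are 2
      obtain ⟨a, b, ha, hb, hab⟩ := hE
      have hadj : (graphP4P3.induce s).Adj ⟨a, ha⟩ ⟨b, hb⟩ := hab
      have hcol2 : (graphP4P3.induce s).Colorable 2 :=
        ⟨Coloring.mk (fun v => pcP4P3 v.1) (fun {u v} h => pcP4P3_valid h)⟩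
      rw [chromaticNumber_eq_two_of hcol2 hadj]
      have hbc : bChromaticNumber (graphP4P3.induce s) = 2 := by
        refine bChromaticNumber_eq _ 2 ?_ ?_
        · -- a b-coloring with two colors
          refine ⟨fun v => pcP4P3 v.1, fun _ _ hadj => pcP4P3_valid hadj, ?_⟩
          intro i
          have hne : pcP4P3 a ≠ pcP4P3 b := pcP4P3_valid hab
          rcases fin2_cover _ _ i hne with hi | hi
          · refine ⟨⟨a, ha⟩, hi.symm, ?_⟩
            intro j hj
            rcases fin2_cover _ _ j hne with hj' | hj'
            · exact absurd (hj'.trans hi.symm) hj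
            · exact ⟨⟨b, hb⟩, hab, hj'.symm⟩
          · refine ⟨⟨b, hb⟩, hi.symm, ?_⟩
            intro j hj
            rcases fin2_cover _ _ j hne.symm with hj' | hj'
            · exact absurd (hj'.trans hi.symm) hj
            · exact ⟨⟨a, ha⟩, hadj.symm, hj'.symm⟩
        · -- no b-coloring with ≥ 3 colors
          rintro k ⟨c, hc⟩
          by_contra hk
          push_neg at hk
          have h3 : 3 ≤ k := hk
          -- a b-vertex with two distinct neighbour colors lies in {1,2,5} and puts
          -- its neighbours into s
          have claim : ∀ (u : ↥s) (j j' : Fin k), j ≠ j' →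
              (∃ v, (graphP4P3.induce s).Adj u v ∧ c v = j) →
              (∃ v, (graphP4P3.induce s).Adj u v ∧ c v = j') →
              ((u : Fin 7) = 1 ∧ (0 : Fin 7) ∈ s ∧ (2 : Fin 7) ∈ s) ∨
              ((u : Fin 7) = 2 ∧ (1 : Fin 7) ∈ s ∧ (3 : Fin 7) ∈ s) ∨
              ((u : Fin 7) = 5 ∧ (4 : Fin 7) ∈ s ∧ (6 : Fin 7) ∈ s) := by
            rintro u j j' hjj ⟨v, hav, hcv⟩ ⟨w, haw, hcw⟩
            have hvw : (v : Fin 7) ≠ (w : Fin 7) := by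
              intro h
              exact hjj (hcv ▸ hcw ▸ congrArg c (Subtype.ext h))
            rcases P4P3_two_nbrs u v w hav haw hvw with
              ⟨h1, (⟨e1, e2⟩ | ⟨e1, e2⟩)⟩ | ⟨h1, (⟨e1, e2⟩ | ⟨e1, e2⟩)⟩ |
              ⟨h1, (⟨e1, e2⟩ | ⟨e1, e2⟩)⟩
            · exact Or.inl ⟨h1, e1 ▸ v.2, e2 ▸ w.2⟩
            · exact Or.inl ⟨h1, e2 ▸ w.2, e1 ▸ v.2⟩
            · exact Or.inr (Or.inl ⟨h1, e1 ▸ v.2, e2 ▸ w.2⟩)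
            · exact Or.inr (Or.inl ⟨h1, e2 ▸ w.2, e1 ▸ v.2⟩)
            · exact Or.inr (Or.inr ⟨h1, e1 ▸ v.2, e2 ▸ w.2⟩)
            · exact Or.inr (Or.inr ⟨h1, e2 ▸ w.2, e1 ▸ v.2⟩)
          obtain ⟨u0, hu0, hb0⟩ := hc.2 ⟨0, by omega⟩
          obtain ⟨u1, hu1, hb1⟩ := hc.2 ⟨1, by omega⟩
          obtain ⟨u2, hu2, hb2⟩ := hc.2 ⟨2, by omega⟩
          have ne01 : (⟨0, by omega⟩ : Fin k) ≠ ⟨1, by omega⟩ := by simp [Fin.ext_iff]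
          have ne02 : (⟨0, by omega⟩ : Fin k) ≠ ⟨2, by omega⟩ := by simp [Fin.ext_iff]
          have ne12 : (⟨1, by omega⟩ : Fin k) ≠ ⟨2, by omega⟩ := by simp [Fin.ext_iff]
          have D0 := claim u0 _ _ ne12 (hb0 _ ne01.symm) (hb0 _ ne02.symm)
          have D1 := claim u1 _ _ ne02 (hb1 _ ne01) (hb1 _ ne12.symm)
          have D2 := claim u2 _ _ ne01 (hb2 _ ne02) (hb2 _ ne12)
          have vne01 : (u0 : Fin 7) ≠ (u1 : Fin 7) := by
            intro h
            exact ne01 (hu0 ▸ hu1 ▸ congrArg c (Subtype.ext h))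
          have vne02 : (u0 : Fin 7) ≠ (u2 : Fin 7) := by
            intro h
            exact ne02 (hu0 ▸ hu2 ▸ congrArg c (Subtype.ext h))
          have vne12 : (u1 : Fin 7) ≠ (u2 : Fin 7) := by
            intro h
            exact ne12 (hu1 ▸ hu2 ▸ congrArg c (Subtype.ext h))
          rcases D0 with ⟨e0, m0a, m0b⟩ | ⟨e0, m0a, m0b⟩ | ⟨e0, m0a, m0b⟩ <;>
            rcases D1 with ⟨e1, m1a, m1b⟩ | ⟨e1, m1a, m1b⟩ | ⟨e1, m1a, m1b⟩ <;>
            rcases D2 with ⟨e2, m2a, m2b⟩ | ⟨e2, m2a, m2b⟩ | ⟨e2, m2a, m2b⟩ <;>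
            first
              | exact vne01 (e0.trans e1.symm)
              | exact vne02 (e0.trans e2.symm)
              | exact vne12 (e1.trans e2.symm)
              | · refine hs (Set.eq_univ_iff_forall.2 fun x => ?_)
                  rcases fin7_cases x with h | h | h | h | h | h | h <;> subst h <;>
                    first
                      | exact m0a | exact m0b | exact m1a | exact m1b
                      | exact m2a | exact m2b
                      | exact e0 ▸ u0.2 | exact e1 ▸ u1.2 | exact e2 ▸ u2.2
      rw [hbc]
      rfl
    · -- H has no edge
      push_neg at hE
      have hnoadj : ∀ u v : ↥s, ¬ (graphP4P3.induce s).Adj u v := by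
        intro u v h
        exact hE u.1 v.1 u.2 v.2 h
      by_cases hne : Nonempty ↥s
      · -- χ = b = 1
        have col1 : (graphP4P3.induce s).Colorable 1 :=
          ⟨Coloring.mk (fun _ => 0) (fun {u v} h => absurd h (hnoadj u v))⟩
        have hchi : (graphP4P3.induce s).chromaticNumber = 1 :=
          le_antisymm (by exact_mod_cast col1.chromaticNumber_le)
            (Order.one_le_iff_pos.2 (chromaticNumber_pos col1))
        rw [hchi]
        have hbc : bChromaticNumber (graphP4P3.induce s) = 1 := by
          refine bChromaticNumber_eq _ 1 ?_ ?_
          · refine ⟨fun _ => 0, fun u v h => absurd h (hnoadj u v), ?_⟩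
            intro i
            refine ⟨Classical.arbitrary _, Subsingleton.elim _ _, ?_⟩
            intro j hj
            exact absurd (Subsingleton.elim j i) hj
          · rintro k ⟨c, hc⟩
            by_contra hk
            push_neg at hk
            obtain ⟨u, -, hb⟩ := hc.2 ⟨0, by omega⟩
            obtain ⟨v, hv, -⟩ := hb ⟨1, by omega⟩ (by simp [Fin.ext_iff])
            exact hnoadj u v hv
        rw [hbc]
        rfl
      · -- s is empty : χ = b = 0
        have : IsEmpty ↥s := not_nonempty_iff.1 hne
        rw [chromaticNumber_eq_zero_of_isEmpty]
        have hbc : bChromaticNumber (graphP4P3.induce s) = 0 := by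
          refine bChromaticNumber_eq _ 0 ?_ ?_
          · refine ⟨fun v => isEmptyElim v, fun u _ _ => isEmptyElim u, fun i => isEmptyElim i⟩
          · rintro k ⟨c, hc⟩
            by_contra hk
            push_neg at hk
            obtain ⟨u, -, -⟩ := hc.2 ⟨0, by omega⟩
            exact isEmptyElim u
        rw [hbc]
        rfl
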